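/- The lower semicontinuous polyconvex envelope of an isotropic function W : ℝ^{d×d} → ℝ ∪ {∞} is isotropic. -/
import Mathlib


open Matrix

noncomputable section

abbrev Mat (d : ℕ) := Matrix (Fin d) (Fin d) ℝ

def SO (d : ℕ) : Set (Mat d) := {R | R * Rᵀ = 1 ∧ R.det = 1}

def Isotropic {d : ℕ} {α : Type*} (W : Mat d → α) : Prop :=
  ∀ (F R₁ R₂ : Mat d), R₁ ∈ SO d → R₂ ∈ SO d → W (R₁ * F * R₂) = W F

def ConvexE {V : Type*} [AddCommGroup V] [Module ℝ V] (g : V → EReal) : Prop :=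
  ∀ (x y : V) (a b : ℝ), 0 ≤ a → 0 ≤ b → a + b = 1 →
    g (a • x + b • y) ≤ (a : EReal) * g x + (b : EReal) * g y

/-- The minors map for `d = 2`: `𝓜(F) = (F, det F) ∈ ℝ⁵`. -/
def M2 (F : Mat 2) : Fin 5 → ℝ := ![F 0 0, F 0 1, F 1 0, F 1 1, F.det]

/-- `V` is lower semicontinuous polyconvex. -/
def LscPolyconvex (V : Mat 2 → EReal) : Prop :=
  ∃ G : (Fin 5 → ℝ) → EReal, ConvexE G ∧ LowerSemicontinuous G ∧ ∀ F, V F = G (M2 F)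

/-- The lsc-polyconvex envelope: the pointwise supremum of all lsc-polyconvex
functions below `W`. -/
def lscPcEnvelope (W : Mat 2 → EReal) (F : Mat 2) : EReal :=
  sSup {y | ∃ V : Mat 2 → EReal, LscPolyconvex V ∧ (∀ F', V F' ≤ W F') ∧ y = V F}

-- auxiliary
def toM (x : Fin 5 → ℝ) : Mat 2 := !![x 0, x 1; x 2, x 3]

lemma toM_add (x y : Fin 5 → ℝ) : toM (x + y) = toM x + toM y := by
  ext i j; fin_cases i <;> fin_cases j <;> simp [toM]

lemma toM_smul (a : ℝ) (x : Fin 5 → ℝ) : toM (a • x) = a • toM x := by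
  ext i j; fin_cases i <;> fin_cases j <;> simp [toM]

lemma toM_M2 (F : Mat 2) : toM (M2 F) = F := by
  ext i j; fin_cases i <;> fin_cases j <;> simp [toM, M2]

def Lmap (R₁ R₂ : Mat 2) : (Fin 5 → ℝ) →ₗ[ℝ] (Fin 5 → ℝ) where
  toFun x := ![(R₁ * toM x * R₂) 0 0, (R₁ * toM x * R₂) 0 1,
    (R₁ * toM x * R₂) 1 0, (R₁ * toM x * R₂) 1 1, x 4]
  map_add' x y := by
    funext i
    fin_cases i <;> simp [toM_add, Matrix.mul_add, Matrix.add_mul]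
  map_smul' a x := by
    funext i
    fin_cases i <;> simp [toM_smul, Matrix.mul_smul, Matrix.smul_mul]

lemma Lmap_M2 (R₁ R₂ : Mat 2) (hR₁ : R₁ ∈ SO 2) (hR₂ : R₂ ∈ SO 2) (F : Mat 2) :
    Lmap R₁ R₂ (M2 F) = M2 (R₁ * F * R₂) := by
  have h : toM ![F 0 0, F 0 1, F 1 0, F 1 1, F.det] = F := toM_M2 F
  funext i
  fin_cases i <;>
    · simp only [Lmap, LinearMap.coe_mk, AddHom.coe_mk, M2, h]
      simp [Matrix.det_mul, hR₁.2, hR₂.2]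

lemma SO_transpose {R : Mat 2} (hR : R ∈ SO 2) : Rᵀ ∈ SO 2 := by
  obtain ⟨h1, h2⟩ := hR
  refine ⟨?_, by simp [h2]⟩
  rw [Matrix.transpose_transpose]
  exact mul_eq_one_comm.mp h1

lemma lscPC_comp {V : Mat 2 → EReal} (hV : LscPolyconvex V) {R₁ R₂ : Mat 2}
    (hR₁ : R₁ ∈ SO 2) (hR₂ : R₂ ∈ SO 2) :
    LscPolyconvex (fun F => V (R₁ * F * R₂)) := by
  obtain ⟨G, hGc, hGl, hGe⟩ := hV
  refine ⟨G ∘ Lmap R₁ R₂, ?_, ?_, ?_⟩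
  · intro x y a b ha hb hab
    have : (Lmap R₁ R₂) (a • x + b • y) = a • (Lmap R₁ R₂ x) + b • (Lmap R₁ R₂ y) := by
      simp
    simpa [Function.comp, this] using hGc (Lmap R₁ R₂ x) (Lmap R₁ R₂ y) a b ha hb hab
  · have hcont : Continuous (Lmap R₁ R₂) := (Lmap R₁ R₂).continuous_of_finiteDimensional
    intro x y hy
    exact (hcont.tendsto x).eventually (hGl (Lmap R₁ R₂ x) y hy)
  · intro F
    simp only [Function.comp, Lmap_M2 R₁ R₂ hR₁ hR₂]
    exact hGe (R₁ * F * R₂)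

/-- The lsc-polyconvex envelope of an isotropic function is isotropic. -/
theorem stmt17 (W : Mat 2 → EReal) (hW : Isotropic W) :
    Isotropic (lscPcEnvelope W) := by
  intro F R₁ R₂ hR₁ hR₂
  unfold lscPcEnvelope
  congr 1
  ext y
  constructor
  · rintro ⟨V, hVpc, hVle, rfl⟩
    refine ⟨fun F' => V (R₁ * F' * R₂), lscPC_comp hVpc hR₁ hR₂, ?_, rfl⟩
    intro F'
    calc V (R₁ * F' * R₂) ≤ W (R₁ * F' * R₂) := hVle _
      _ = W F' := hW F' R₁ R₂ hR₁ hR₂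
  · rintro ⟨V, hVpc, hVle, rfl⟩
    refine ⟨fun F' => V (R₁ᵀ * F' * R₂ᵀ), lscPC_comp hVpc (SO_transpose hR₁) (SO_transpose hR₂), ?_, ?_⟩
    · intro F'
      calc V (R₁ᵀ * F' * R₂ᵀ) ≤ W (R₁ᵀ * F' * R₂ᵀ) := hVle _
        _ = W F' := hW F' R₁ᵀ R₂ᵀ (SO_transpose hR₁) (SO_transpose hR₂)
    · have h1 : R₁ᵀ * R₁ = 1 := mul_eq_one_comm.mp hR₁.1
      have h2 : R₂ * R₂ᵀ = 1 := hR₂.1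
      show V F = V (R₁ᵀ * (R₁ * F * R₂) * R₂ᵀ)
      congr 1
      symm
      calc R₁ᵀ * (R₁ * F * R₂) * R₂ᵀ = (R₁ᵀ * R₁) * F * (R₂ * R₂ᵀ) := by
            noncomm_ring
        _ = F := by rw [h1, h2]; simp
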